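/- Let X₁, ..., X_T be independent integrable random variables with μᵢ = E[Xᵢ], X₀ = 0, μ_{T+1} = 0. Any online trading algorithm (a possibly randomized policy whose decision at step i depends only on X₁, ..., Xᵢ and the distributions, holding at most one unit, starting with one unit bought at price 0) has expected profit at most Σ_{i=1}^{T} E[max(μᵢ - X_{i-1}, 0)]. -/

import Mathlib

open MeasureTheory ProbabilityTheory Finset

lemma abel_aux (h x : ℕ → ℝ) (hx0 : x 0 = 0) (T : ℕ) :
    ∑ i ∈ Icc 1 T, (h (i-1) - h i) * x i
      = ∑ i ∈ Icc 1 T, h (i-1) * (x i - x (i-1)) - h T * x T := by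
  induction T with
  | zero => simp [hx0]
  | succ n ih =>
      rw [Finset.sum_Icc_succ_top (by omega), Finset.sum_Icc_succ_top (by omega), ih]
      simp only [Nat.add_sub_cancel]
      ring

theorem online_alg_upper_bound {Ω : Type*} [MeasureSpace Ω]
    [IsProbabilityMeasure (ℙ : Measure Ω)]
    (T : ℕ) (X : ℕ → Ω → ℝ) (μ : ℕ → ℝ)
    (hX0 : ∀ ω, X 0 ω = 0)
    (hmeas : ∀ i, Measurable (X i))
    (hint : ∀ i, Integrable (X i))
    (hnonneg : ∀ i ω, 0 ≤ X i ω)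
    (hindepX : iIndepFun X ℙ)
    (hμ : ∀ i ∈ Icc 1 T, μ i = ∫ ω, X i ω)
    -- the online algorithm: buy/sell indicators, one action per day
    (B S : ℕ → Ω → Bool)
    (hmB : ∀ i, Measurable (B i)) (hmS : ∀ i, Measurable (S i))
    (hB0 : ∀ ω, B 0 ω = true)  -- the initial unit is bought at time 0 at price X 0 = 0
    (hS0 : ∀ ω, S 0 ω = false)
    (hone : ∀ i ω, ¬(B i ω = true ∧ S i ω = true))
    -- holding at most one unit, starting with one unit bought at time 0
    (hhold : ∀ ω, ∀ t ≤ T,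
      (∑ j ∈ Icc 0 t, (S j ω).toNat) ≤ (∑ j ∈ Icc 0 t, (B j ω).toNat) ∧
      (∑ j ∈ Icc 0 t, (B j ω).toNat) ≤ (∑ j ∈ Icc 0 t, (S j ω).toNat) + 1)
    -- the decisions up to time i - 1 depend only on X 1, ..., X (i-1)
    -- (and private randomness), hence are independent of X i
    (hadapted : ∀ i ∈ Icc 1 T,
      IndepFun (fun ω => fun j : Fin i => (B j ω, S j ω)) (X i) ℙ) :
    (∫ ω, ∑ i ∈ Icc 1 T,
        ((if S i ω then X i ω else 0) - if B i ω then X i ω else 0)) ≤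
      ∑ i ∈ Icc 1 T, ∫ ω, max (μ i - X (i - 1) ω) 0 := by
  classical
  set H : ℕ → Ω → ℝ := fun t ω =>
    ∑ j ∈ Icc 0 t, (((B j ω).toNat : ℝ) - ((S j ω).toNat : ℝ)) with hHdef
  have hHeq : ∀ t ω, H t ω =
      ((∑ j ∈ Icc 0 t, (B j ω).toNat : ℕ) : ℝ) - ((∑ j ∈ Icc 0 t, (S j ω).toNat : ℕ) : ℝ) := by
    intro t ω; simp [hHdef, Finset.sum_sub_distrib]
  have hH0 : ∀ t ω, t ≤ T → 0 ≤ H t ω := by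
    intro t ω ht
    rw [hHeq]
    have h1 := (hhold ω t ht).1
    have : ((∑ j ∈ Icc 0 t, (S j ω).toNat : ℕ) : ℝ) ≤ ((∑ j ∈ Icc 0 t, (B j ω).toNat : ℕ) : ℝ) :=
      Nat.cast_le.2 h1
    linarith
  have hH1 : ∀ t ω, t ≤ T → H t ω ≤ 1 := by
    intro t ω ht
    rw [hHeq]
    have h2 := (hhold ω t ht).2
    have : ((∑ j ∈ Icc 0 t, (B j ω).toNat : ℕ) : ℝ)
        ≤ ((∑ j ∈ Icc 0 t, (S j ω).toNat : ℕ) : ℝ) + 1 := by exact_mod_cast h2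
    linarith
  have hHmeas : ∀ t, Measurable (H t) := by
    intro t
    apply Finset.measurable_sum
    intro j _
    exact Measurable.sub
      ((measurable_from_top (f := fun b : Bool => ((b.toNat : ℝ)))).comp (hmB j))
      ((measurable_from_top (f := fun b : Bool => ((b.toNat : ℝ)))).comp (hmS j))
  have hHsm : ∀ t, AEStronglyMeasurable (H t) ℙ := fun t => (hHmeas t).aestronglyMeasurable
  -- recurrence
  have hrec : ∀ i ω, 1 ≤ i →
      H (i-1) ω - H i ω = ((S i ω).toNat : ℝ) - ((B i ω).toNat : ℝ) := by
    intro i ω hi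
    obtain ⟨k, rfl⟩ : ∃ k, i = k + 1 := ⟨i - 1, by omega⟩
    simp only [hHdef, Nat.add_sub_cancel]
    rw [Finset.sum_Icc_succ_top (Nat.zero_le _)]
    ring
  -- pointwise term identity
  have hterm : ∀ i ω, 1 ≤ i →
      ((if S i ω then X i ω else 0) - if B i ω then X i ω else 0)
        = (H (i-1) ω - H i ω) * X i ω := by
    intro i ω hi
    rw [hrec i ω hi]
    rcases Bool.dichotomy (S i ω) with hs | hs <;> rcases Bool.dichotomy (B i ω) with hb | hb <;>
      simp [hs, hb]
  -- integrability facts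
  have hintL : ∀ i ∈ Icc 1 T, Integrable (fun ω => (H (i-1) ω - H i ω) * X i ω) := by
    intro i hi
    obtain ⟨hi1, hiT⟩ := mem_Icc.1 hi
    refine (hint i).bdd_mul ((hHsm (i-1)).sub (hHsm i)) (c := 2) (ae_of_all _ fun ω => ?_)
    have a0 := hH0 (i-1) ω (by omega)
    have a1 := hH1 (i-1) ω (by omega)
    have b0 := hH0 i ω hiT
    have b1 := hH1 i ω hiT
    rw [Real.norm_eq_abs, abs_le]
    constructor <;> linarith
  have hintG : ∀ i ∈ Icc 1 T, Integrable (fun ω => H (i-1) ω * (X i ω - X (i-1) ω)) := by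
    intro i hi
    obtain ⟨hi1, hiT⟩ := mem_Icc.1 hi
    refine ((hint i).sub (hint (i-1))).bdd_mul (hHsm (i-1)) (c := 1) (ae_of_all _ fun ω => ?_)
    have a0 := hH0 (i-1) ω (by omega)
    have a1 := hH1 (i-1) ω (by omega)
    rw [Real.norm_eq_abs, abs_le]
    constructor <;> linarith
  -- rewrite LHS integrand
  have hLrw : (∫ ω, ∑ i ∈ Icc 1 T, ((if S i ω then X i ω else 0) - if B i ω then X i ω else 0))
      = ∫ ω, ∑ i ∈ Icc 1 T, (H (i-1) ω - H i ω) * X i ω := by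
    congr 1; funext ω
    exact Finset.sum_congr rfl fun i hi => hterm i ω (mem_Icc.1 hi).1
  rw [hLrw]
  have step1 : (∫ ω, ∑ i ∈ Icc 1 T, (H (i-1) ω - H i ω) * X i ω)
      ≤ ∫ ω, ∑ i ∈ Icc 1 T, H (i-1) ω * (X i ω - X (i-1) ω) := by
    apply integral_mono (integrable_finset_sum _ hintL) (integrable_finset_sum _ hintG)
    intro ω
    show ∑ i ∈ Icc 1 T, (H (i-1) ω - H i ω) * X i ω
        ≤ ∑ i ∈ Icc 1 T, H (i-1) ω * (X i ω - X (i-1) ω)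
    have habel := abel_aux (fun t => H t ω) (fun t => X t ω) (hX0 ω) T
    rw [habel]
    have h1 : 0 ≤ H T ω * X T ω := mul_nonneg (hH0 T ω le_rfl) (hnonneg T ω)
    linarith
  refine step1.trans ?_
  rw [integral_finset_sum _ hintG]
  apply Finset.sum_le_sum
  intro i hi
  obtain ⟨hi1, hiT⟩ := mem_Icc.1 hi
  have hkT : i - 1 ≤ T := by omega
  -- integrability of H (i-1)
  have hHint : Integrable (H (i-1)) := by
    have := (integrable_const (1 : ℝ)).bdd_mul (hHsm (i-1)) (c := 1) (ae_of_all _ fun ω => by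
      rw [Real.norm_eq_abs, abs_le]
      exact ⟨by linarith [hH0 (i-1) ω hkT], hH1 (i-1) ω hkT⟩)
    simpa using this
  -- independence of H (i-1) and X i
  have hicc : Icc 0 (i-1) = Finset.range i := by
    ext j; simp only [mem_Icc, Finset.mem_range]; omega
  have hφm : Measurable (fun v : Fin i → Bool × Bool =>
      ∑ j : Fin i, (((v j).1.toNat : ℝ) - ((v j).2.toNat : ℝ))) := by
    apply Finset.measurable_sum
    intro j _
    exact Measurable.sub
      ((measurable_from_top (f := fun b : Bool => ((b.toNat : ℝ)))).comp
        (measurable_fst.comp (measurable_pi_apply j)))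
      ((measurable_from_top (f := fun b : Bool => ((b.toNat : ℝ)))).comp
        (measurable_snd.comp (measurable_pi_apply j)))
  have hindep : IndepFun (H (i-1)) (X i) ℙ := by
    have h := (hadapted i hi).comp hφm measurable_id
    have hcomp : ((fun v : Fin i → Bool × Bool =>
        ∑ j : Fin i, (((v j).1.toNat : ℝ) - ((v j).2.toNat : ℝ)))
          ∘ fun ω => fun j : Fin i => (B j ω, S j ω)) = H (i-1) := by
      funext ω
      simp only [Function.comp, hHdef]
      rw [hicc, ← Fin.sum_univ_eq_sum_range (fun j => ((B j ω).toNat : ℝ) - ((S j ω).toNat : ℝ)) i]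
    rwa [hcomp, Function.id_comp] at h
  have hmul : (∫ ω, H (i-1) ω * X i ω) = (∫ ω, H (i-1) ω) * ∫ ω, X i ω := by
    have := hindep.integral_mul_eq_mul_integral hHint.aestronglyMeasurable (hint i).aestronglyMeasurable
    simpa [Pi.mul_apply] using this
  have hHXi : Integrable (fun ω => H (i-1) ω * X i ω) :=
    (hint i).bdd_mul (hHsm (i-1)) (c := 1) (ae_of_all _ fun ω => by
      rw [Real.norm_eq_abs, abs_le]
      exact ⟨by linarith [hH0 (i-1) ω hkT], hH1 (i-1) ω hkT⟩)
  have hHX : Integrable (fun ω => H (i-1) ω * X (i-1) ω) :=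
    (hint (i-1)).bdd_mul (hHsm (i-1)) (c := 1) (ae_of_all _ fun ω => by
      rw [Real.norm_eq_abs, abs_le]
      exact ⟨by linarith [hH0 (i-1) ω hkT], hH1 (i-1) ω hkT⟩)
  have lhs_eq : (∫ ω, H (i-1) ω * (X i ω - X (i-1) ω))
      = ∫ ω, H (i-1) ω * (μ i - X (i-1) ω) := by
    have e1 : (∫ ω, H (i-1) ω * (X i ω - X (i-1) ω))
        = (∫ ω, H (i-1) ω * X i ω) - ∫ ω, H (i-1) ω * X (i-1) ω := by
      rw [← integral_sub hHXi hHX]; congr 1; funext ω; ring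
    have e2 : (∫ ω, H (i-1) ω * (μ i - X (i-1) ω))
        = (∫ ω, H (i-1) ω * μ i) - ∫ ω, H (i-1) ω * X (i-1) ω := by
      rw [← integral_sub (hHint.mul_const _) hHX]; congr 1; funext ω; ring
    rw [e1, e2, hmul, ← hμ i hi, integral_mul_const]
  rw [lhs_eq]
  apply integral_mono
  · exact ((integrable_const (μ i)).sub (hint (i-1))).bdd_mul (hHsm (i-1)) (c := 1) (ae_of_all _ fun ω => by
      rw [Real.norm_eq_abs, abs_le]
      exact ⟨by linarith [hH0 (i-1) ω hkT], hH1 (i-1) ω hkT⟩)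
  · exact ((integrable_const (μ i)).sub (hint (i-1))).pos_part
  · intro ω
    show H (i-1) ω * (μ i - X (i-1) ω) ≤ max (μ i - X (i-1) ω) 0
    have a0 := hH0 (i-1) ω hkT
    have a1 := hH1 (i-1) ω hkT
    rcases le_or_gt 0 (μ i - X (i-1) ω) with h | h
    · have : H (i-1) ω * (μ i - X (i-1) ω) ≤ 1 * (μ i - X (i-1) ω) :=
        mul_le_mul_of_nonneg_right a1 h
      rw [max_eq_left h]; linarith
    · have : H (i-1) ω * (μ i - X (i-1) ω) ≤ 0 := mul_nonpos_of_nonneg_of_nonpos a0 h.le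
      rw [max_eq_right h.le]; linarith
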